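/- (Binomial Katona Theorem, odd case.) Let ℓ ≥ 1 be an integer with w = 2ℓ − 1 < n, and suppose F ⊆ 2^[n] is w-union. Then ‖F‖_n ≤ ℓ + ℓ/n. -/

import Mathlib

open Finset

/-- The binomial norm of a family `F` of subsets of `[n]`:
`‖F‖ₙ = ∑_{A ∈ F} 1 / C(n, |A|)`. -/
noncomputable def binNorm (n : ℕ) (F : Finset (Finset ℕ)) : ℝ :=
  ∑ A ∈ F, 1 / (n.choose A.card : ℝ)

lemma card_filter_supersets (S A : Finset ℕ) (m : ℕ) (hA : A ⊆ S) (hAm : A.card ≤ m) :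
    (((S.powersetCard m)).filter (fun T => A ⊆ T)).card
      = (S.card - A.card).choose (m - A.card) := by
  rw [← Finset.card_sdiff_of_subset hA, ← Finset.card_powersetCard (m - A.card) (S \ A)]
  apply Finset.card_bij' (fun T _ => T \ A) (fun U _ => U ∪ A)
  · intro T hT
    simp only [mem_filter, mem_powersetCard] at hT
    obtain ⟨⟨hTS, hTc⟩, hAT⟩ := hT
    rw [mem_powersetCard]
    constructor
    · exact sdiff_subset_sdiff hTS (le_refl A)
    · rw [card_sdiff_of_subset hAT, hTc]
  · intro U hU
    rw [mem_powersetCard] at hU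
    obtain ⟨hUS, hUc⟩ := hU
    have hdisj : Disjoint U A := Finset.disjoint_of_subset_left hUS sdiff_disjoint
    simp only [mem_filter, mem_powersetCard]
    refine ⟨⟨?_, ?_⟩, subset_union_right⟩
    · exact union_subset (hUS.trans sdiff_subset) hA
    · rw [card_union_of_disjoint hdisj, hUc]
      omega
  · intro T hT
    simp only [mem_filter, mem_powersetCard] at hT
    exact sdiff_union_of_subset hT.2
  · intro U hU
    rw [mem_powersetCard] at hU
    have hdisj : Disjoint U A := Finset.disjoint_of_subset_left hU.1 sdiff_disjoint
    rw [union_sdiff_right, sdiff_eq_self_of_disjoint hdisj]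

lemma choose_ratio (n m k : ℕ) (hmn : m ≤ n) (hkm : k ≤ m) :
    ((n - k).choose (m - k) : ℝ) * (1 / (m.choose k : ℝ))
      = (n.choose m : ℝ) * (1 / (n.choose k : ℝ)) := by
  have h1 : (0:ℝ) < m.choose k := by exact_mod_cast Nat.choose_pos hkm
  have h2 : (0:ℝ) < n.choose k := by exact_mod_cast Nat.choose_pos (hkm.trans hmn)
  rw [mul_one_div, mul_one_div, div_eq_div_iff h1.ne' h2.ne']
  have key := Nat.choose_mul (n := n) hkm
  exact_mod_cast (mul_comm ((n-k).choose (m-k)) (n.choose k)).trans key.symm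

lemma step1 (n m : ℕ) (hmn : m ≤ n) (F : Finset (Finset ℕ))
    (hsub : ∀ A ∈ F, A ⊆ range n) (hcard : ∀ A ∈ F, A.card ≤ m) :
    (n.choose m : ℝ) * binNorm n F
      = ∑ T ∈ (range n).powersetCard m, binNorm m (F.filter (· ⊆ T)) := by
  unfold binNorm
  simp_rw [Finset.sum_filter]
  rw [Finset.sum_comm]
  rw [mul_sum]
  apply Finset.sum_congr rfl
  intro A hA
  rw [← Finset.sum_filter, Finset.sum_const]
  rw [card_filter_supersets (range n) A m (hsub A hA) (hcard A hA), card_range]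
  rw [nsmul_eq_mul]
  exact (choose_ratio n m A.card hmn (hcard A hA)).symm

lemma step2 (ℓ : ℕ) (hℓ : 1 ≤ ℓ) (T : Finset ℕ) (hT : T.card = 2*ℓ)
    (F : Finset (Finset ℕ))
    (hunion : ∀ A ∈ F, ∀ B ∈ F, (A ∪ B).card ≤ 2*ℓ - 1) :
    binNorm (2*ℓ) (F.filter (· ⊆ T))
      ≤ (ℓ:ℝ) + ((F.filter (fun A => A.card = ℓ ∧ A ⊆ T)).card : ℝ)
          / ((2*ℓ).choose ℓ : ℝ) := by
  classical
  set H := F.filter (· ⊆ T) with hH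
  set H' := H.image (fun A => T \ A) with hH'
  set G := H ∪ H' with hG
  set Fl := F.filter (fun A => A.card = ℓ ∧ A ⊆ T) with hFl
  have hHmem : ∀ A ∈ H, A ∈ F ∧ A ⊆ T := by
    intro A hA; rw [hH, mem_filter] at hA; exact hA
  have hCpos : (0:ℝ) < ((2*ℓ).choose ℓ : ℝ) := by
    exact_mod_cast Nat.choose_pos (by omega)
  have hinj : ∀ A ∈ H, ∀ B ∈ H, T \ A = T \ B → A = B := by
    intro A hA B hB hEq
    have h1 := Finset.sdiff_sdiff_eq_self (hHmem A hA).2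
    have h2 := Finset.sdiff_sdiff_eq_self (hHmem B hB).2
    rw [← h1, ← h2, hEq]
  have hnormeq : binNorm (2*ℓ) H' = binNorm (2*ℓ) H := by
    rw [hH', binNorm, Finset.sum_image hinj]
    apply Finset.sum_congr rfl
    intro A hA
    have hAT := (hHmem A hA).2
    have hcle : A.card ≤ 2*ℓ := hT ▸ card_le_card hAT
    rw [card_sdiff_of_subset hAT, hT, Nat.choose_symm hcle]
  have hdisj : Disjoint H H' := by
    rw [Finset.disjoint_left]
    intro A hA hA'
    rw [hH', mem_image] at hA'
    obtain ⟨B, hB, hBA⟩ := hA'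
    have hcard : (A ∪ B).card = 2*ℓ := by
      rw [← hBA, sdiff_union_of_subset (hHmem B hB).2, hT]
    have := hunion A (hHmem A hA).1 B (hHmem B hB).1
    omega
  have hsplit : binNorm (2*ℓ) G = binNorm (2*ℓ) H + binNorm (2*ℓ) H' := by
    rw [hG, binNorm, Finset.sum_union hdisj]; rfl
  have hGsubT : ∀ A ∈ G, A ⊆ T := by
    intro A hA
    rw [hG, mem_union] at hA
    rcases hA with h | h
    · exact (hHmem A h).2
    · rw [hH', mem_image] at h
      obtain ⟨B, hB, hBA⟩ := h
      rw [← hBA]; exact sdiff_subset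
  have hfib : binNorm (2*ℓ) G
      = ∑ k ∈ range (2*ℓ+1), ∑ A ∈ G.filter (fun A => A.card = k),
          1 / (((2*ℓ).choose A.card : ℝ)) := by
    rw [binNorm, Finset.sum_fiberwise_of_maps_to]
    intro A hA
    rw [mem_range]
    have := card_le_card (hGsubT A hA)
    omega
  have hfibbound : ∀ k ∈ range (2*ℓ+1),
      ∑ A ∈ G.filter (fun A => A.card = k), 1 / (((2*ℓ).choose A.card : ℝ))
        ≤ if k = ℓ then 2*(Fl.card:ℝ) / ((2*ℓ).choose ℓ : ℝ) else 1 := by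
    intro k hk
    rw [mem_range] at hk
    have hkpos : (0:ℝ) < ((2*ℓ).choose k : ℝ) := by
      exact_mod_cast Nat.choose_pos (by omega)
    have hsum : ∑ A ∈ G.filter (fun A => A.card = k), 1 / (((2*ℓ).choose A.card : ℝ))
        = ((G.filter (fun A => A.card = k)).card : ℝ) / ((2*ℓ).choose k : ℝ) := by
      calc ∑ A ∈ G.filter (fun A => A.card = k), 1 / (((2*ℓ).choose A.card : ℝ))
          = ∑ _A ∈ G.filter (fun A => A.card = k), 1 / (((2*ℓ).choose k : ℝ)) := by
            apply Finset.sum_congr rfl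
            intro A hA
            rw [mem_filter] at hA
            rw [hA.2]
        _ = _ := by rw [Finset.sum_const, nsmul_eq_mul, mul_one_div]
    rw [hsum]
    by_cases hkl : k = ℓ
    · rw [if_pos hkl]
      subst hkl
      have hsubset : G.filter (fun A => A.card = k) ⊆ Fl ∪ Fl.image (fun A => T \ A) := by
        intro A hA
        rw [mem_filter] at hA
        obtain ⟨hAG, hAc⟩ := hA
        rw [hG, mem_union] at hAG
        rw [mem_union]
        rcases hAG with h | h
        · left
          rw [hFl, mem_filter]
          exact ⟨(hHmem A h).1, hAc, (hHmem A h).2⟩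
        · right
          rw [hH', mem_image] at h
          obtain ⟨B, hB, hBA⟩ := h
          have hBT := (hHmem B hB).2
          have hBle : B.card ≤ 2*k := hT ▸ card_le_card hBT
          have hAcard : A.card = 2*k - B.card := by rw [← hBA, card_sdiff_of_subset hBT, hT]
          have hBcard : B.card = k := by omega
          rw [mem_image]
          exact ⟨B, by rw [hFl, mem_filter]; exact ⟨(hHmem B hB).1, hBcard, hBT⟩, hBA⟩
      have hcardle : ((G.filter (fun A => A.card = k)).card : ℝ) ≤ 2*(Fl.card:ℝ) := by
        have h1 := card_le_card hsubset
        have h2 := Finset.card_union_le Fl (Fl.image (fun A => T \ A))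
        have h3 := Finset.card_image_le (s := Fl) (f := fun A => T \ A)
        have h4 : (G.filter (fun A => A.card = k)).card ≤ 2 * Fl.card := by omega
        calc ((G.filter (fun A => A.card = k)).card : ℝ) ≤ ((2 * Fl.card : ℕ) : ℝ) := by
              exact_mod_cast h4
          _ = 2*(Fl.card:ℝ) := by push_cast; ring
      gcongr
    · rw [if_neg hkl]
      rw [div_le_one hkpos]
      have hsubset : G.filter (fun A => A.card = k) ⊆ T.powersetCard k := by
        intro A hA
        rw [mem_filter] at hA
        rw [mem_powersetCard]
        exact ⟨hGsubT A hA.1, hA.2⟩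
      have := card_le_card hsubset
      rw [card_powersetCard, hT] at this
      exact_mod_cast this
  have hsumite : ∑ k ∈ range (2*ℓ+1),
      (if k = ℓ then 2*(Fl.card:ℝ) / ((2*ℓ).choose ℓ : ℝ) else 1)
      = 2*(ℓ:ℝ) + 2*(Fl.card:ℝ) / ((2*ℓ).choose ℓ : ℝ) := by
    rw [← Finset.add_sum_erase _ _ (show ℓ ∈ range (2*ℓ+1) by rw [mem_range]; omega)]
    rw [if_pos rfl]
    have : ∑ k ∈ (range (2*ℓ+1)).erase ℓ,
        (if k = ℓ then 2*(Fl.card:ℝ) / ((2*ℓ).choose ℓ : ℝ) else 1)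
        = ∑ _k ∈ (range (2*ℓ+1)).erase ℓ, (1:ℝ) := by
      apply Finset.sum_congr rfl
      intro k hk
      rw [if_neg (Finset.mem_erase.mp hk).1]
    rw [this, Finset.sum_const, card_erase_of_mem (by rw [mem_range]; omega), card_range]
    push_cast
    ring
  have hGbound : binNorm (2*ℓ) G ≤ 2*(ℓ:ℝ) + 2*(Fl.card:ℝ) / ((2*ℓ).choose ℓ : ℝ) := by
    rw [hfib, ← hsumite]
    exact Finset.sum_le_sum hfibbound
  have h2 : 2 * binNorm (2*ℓ) H ≤ 2*(ℓ:ℝ) + 2*(Fl.card:ℝ) / ((2*ℓ).choose ℓ : ℝ) := by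
    rw [two_mul]
    calc binNorm (2*ℓ) H + binNorm (2*ℓ) H
        = binNorm (2*ℓ) G := by rw [hsplit, hnormeq]
      _ ≤ _ := hGbound
  rw [show 2*(Fl.card:ℝ) / ((2*ℓ).choose ℓ : ℝ) = 2*((Fl.card:ℝ)/((2*ℓ).choose ℓ : ℝ)) by ring] at h2
  linarith

lemma image_val_attachFin {n : ℕ} (s : Finset ℕ) (h : ∀ m ∈ s, m < n) :
    (s.attachFin h).image Fin.val = s := by
  ext b
  simp only [mem_image]
  constructor
  · rintro ⟨a, ha, rfl⟩
    exact (Finset.mem_attachFin h).mp ha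
  · intro hb
    exact ⟨⟨b, h b hb⟩, (Finset.mem_attachFin h).mpr hb, rfl⟩

lemma ekr_nat (n ℓ : ℕ) (hn : 2*ℓ ≤ n) (hℓ : 1 ≤ ℓ) (Fl : Finset (Finset ℕ))
    (hsub : ∀ A ∈ Fl, A ⊆ range n) (hsize : ∀ A ∈ Fl, A.card = ℓ)
    (hint : ∀ A ∈ Fl, ∀ B ∈ Fl, ¬ Disjoint A B) :
    Fl.card ≤ (n-1).choose (ℓ-1) := by
  classical
  have hlt : ∀ A : Finset ℕ, ∀ m ∈ A ∩ range n, m < n := by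
    intro A m hm
    rw [mem_inter, mem_range] at hm
    exact hm.2
  set φ : Finset ℕ → Finset (Fin n) := fun A => (A ∩ range n).attachFin (hlt A) with hφ
  have hinter : ∀ A ∈ Fl, A ∩ range n = A := fun A hA => inter_eq_left.mpr (hsub A hA)
  have hval : ∀ A ∈ Fl, (φ A).image Fin.val = A := by
    intro A hA
    rw [hφ, _root_.image_val_attachFin, hinter A hA]
  set 𝒜 : Finset (Finset (Fin n)) := Fl.image φ with h𝒜
  have hcard𝒜 : 𝒜.card = Fl.card := by
    rw [h𝒜]
    apply Finset.card_image_of_injOn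
    intro A hA B hB hAB
    rw [← hval A hA, ← hval B hB, hAB]
  have hsized : (𝒜 : Set (Finset (Fin n))).Sized ℓ := by
    intro A' hA'
    rw [h𝒜] at hA'
    simp only [coe_image, Set.mem_image, mem_coe] at hA'
    obtain ⟨A, hA, rfl⟩ := hA'
    rw [hφ]
    simp only
    rw [Finset.card_attachFin, hinter A hA]
    exact hsize A hA
  have hints : (𝒜 : Set (Finset (Fin n))).Intersecting := by
    intro A' hA' B' hB'
    simp only [h𝒜, coe_image, Set.mem_image, mem_coe] at hA' hB'
    obtain ⟨A, hA, rfl⟩ := hA'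
    obtain ⟨B, hB, rfl⟩ := hB'
    have := hint A hA B hB
    rw [Finset.not_disjoint_iff] at this ⊢
    obtain ⟨x, hxA, hxB⟩ := this
    have hxn : x < n := mem_range.mp (hsub A hA hxA)
    refine ⟨⟨x, hxn⟩, ?_, ?_⟩
    · rw [hφ]; exact (Finset.mem_attachFin _).mpr (mem_inter.mpr ⟨hxA, mem_range.mpr hxn⟩)
    · rw [hφ]; exact (Finset.mem_attachFin _).mpr (mem_inter.mpr ⟨hxB, mem_range.mpr hxn⟩)
  have h3 : ℓ ≤ n / 2 := Nat.le_div_iff_mul_le (by norm_num) |>.mpr (by omega)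
  have := Finset.erdos_ko_rado hints hsized h3
  omega

lemma step3 (n ℓ : ℕ) (hn : 2*ℓ ≤ n) (F : Finset (Finset ℕ))
    (hsub : ∀ A ∈ F, A ⊆ range n) :
    ∑ T ∈ (range n).powersetCard (2*ℓ),
        (F.filter (fun A => A.card = ℓ ∧ A ⊆ T)).card
      = (F.filter (fun A => A.card = ℓ)).card * (n-ℓ).choose ℓ := by
  classical
  calc ∑ T ∈ (range n).powersetCard (2*ℓ), (F.filter (fun A => A.card = ℓ ∧ A ⊆ T)).card
      = ∑ T ∈ (range n).powersetCard (2*ℓ), ∑ A ∈ F.filter (fun A => A.card = ℓ),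
          (if A ⊆ T then 1 else 0) := by
        apply Finset.sum_congr rfl
        intro T _
        rw [← Finset.filter_filter, Finset.card_filter]
    _ = ∑ A ∈ F.filter (fun A => A.card = ℓ), ∑ T ∈ (range n).powersetCard (2*ℓ),
          (if A ⊆ T then 1 else 0) := Finset.sum_comm
    _ = ∑ A ∈ F.filter (fun A => A.card = ℓ), (n-ℓ).choose ℓ := by
        apply Finset.sum_congr rfl
        intro A hA
        rw [mem_filter] at hA
        rw [← Finset.card_filter]
        rw [card_filter_supersets (range n) A (2*ℓ) (hsub A hA.1) (by omega), card_range, hA.2]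
        congr 1
        omega
    _ = _ := by rw [Finset.sum_const, smul_eq_mul]


theorem stmt_13 (n ℓ : ℕ) (hℓ : 1 ≤ ℓ) (hw : 2 * ℓ - 1 < n)
    (F : Finset (Finset ℕ))
    (hsub : ∀ A ∈ F, A ⊆ Finset.range n)
    (hunion : ∀ A ∈ F, ∀ B ∈ F, (A ∪ B).card ≤ 2 * ℓ - 1) :
    binNorm n F ≤ (ℓ : ℝ) + (ℓ : ℝ) / (n : ℝ) := by
  classical
  have h2n : 2*ℓ ≤ n := by omega
  have hn0 : 0 < n := by omega
  have hcard : ∀ A ∈ F, A.card ≤ 2*ℓ - 1 := by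
    intro A hA
    have := hunion A hA A hA
    rwa [union_self] at this
  have hI := step1 n (2*ℓ) h2n F hsub (fun A hA => by have := hcard A hA; omega)
  have hTle : ∀ T ∈ (range n).powersetCard (2*ℓ),
      binNorm (2*ℓ) (F.filter (· ⊆ T))
        ≤ (ℓ:ℝ) + ((F.filter (fun A => A.card = ℓ ∧ A ⊆ T)).card : ℝ)
            / ((2*ℓ).choose ℓ : ℝ) := by
    intro T hT
    rw [mem_powersetCard] at hT
    exact step2 ℓ hℓ T hT.2 F hunion
  have hsum1 : (n.choose (2*ℓ) : ℝ) * binNorm n F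
      ≤ ∑ T ∈ (range n).powersetCard (2*ℓ),
          ((ℓ:ℝ) + ((F.filter (fun A => A.card = ℓ ∧ A ⊆ T)).card : ℝ)
            / ((2*ℓ).choose ℓ : ℝ)) := by
    rw [hI]; exact Finset.sum_le_sum hTle
  rw [Finset.sum_add_distrib, Finset.sum_const, Finset.card_powersetCard, card_range,
    ← Finset.sum_div, nsmul_eq_mul] at hsum1
  -- EKR bound
  have hekr : (F.filter (fun A => A.card = ℓ)).card ≤ (n-1).choose (ℓ-1) := by
    apply ekr_nat n ℓ h2n hℓ
    · intro A hA; exact hsub A (mem_filter.mp hA).1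
    · intro A hA; exact (mem_filter.mp hA).2
    · intro A hA B hB hdisj
      rw [mem_filter] at hA hB
      have hu := hunion A hA.1 B hB.1
      have := Finset.card_union_of_disjoint hdisj
      rw [hA.2, hB.2] at this
      omega
  -- sum of g over T
  have hgsum : ∑ T ∈ (range n).powersetCard (2*ℓ),
      ((F.filter (fun A => A.card = ℓ ∧ A ⊆ T)).card : ℝ)
      ≤ ((n-1).choose (ℓ-1) : ℝ) * ((n-ℓ).choose ℓ : ℝ) := by
    have h3 := step3 n ℓ h2n F hsub
    have : (∑ T ∈ (range n).powersetCard (2*ℓ),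
        ((F.filter (fun A => A.card = ℓ ∧ A ⊆ T)).card : ℝ))
        = (((F.filter (fun A => A.card = ℓ)).card * (n-ℓ).choose ℓ : ℕ) : ℝ) := by
      rw [← h3]; push_cast; rfl
    rw [this]
    push_cast
    have hc : (0:ℝ) ≤ ((n-ℓ).choose ℓ : ℝ) := by positivity
    have : ((F.filter (fun A => A.card = ℓ)).card : ℝ) ≤ ((n-1).choose (ℓ-1) : ℝ) := by
      exact_mod_cast hekr
    nlinarith
  -- numeric identity
  have keyN : n * ((n-1).choose (ℓ-1) * (n-ℓ).choose ℓ)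
      = ℓ * (n.choose (2*ℓ) * (2*ℓ).choose ℓ) := by
    have key1 : n.choose (2*ℓ) * (2*ℓ).choose ℓ = n.choose ℓ * (n-ℓ).choose ℓ := by
      have h := Nat.choose_mul (n := n) (show ℓ ≤ 2*ℓ by omega)
      have h2 : 2*ℓ - ℓ = ℓ := by omega
      rwa [h2] at h
    have key2 : n * (n-1).choose (ℓ-1) = ℓ * n.choose ℓ := by
      have h := Nat.add_one_mul_choose_eq (n-1) (ℓ-1)
      have h1 : n - 1 + 1 = n := by omega
      have h2 : ℓ - 1 + 1 = ℓ := by omega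
      simp only [Nat.succ_eq_add_one, h1, h2] at h
      rw [h]
      ring
    calc n * ((n-1).choose (ℓ-1) * (n-ℓ).choose ℓ)
        = (n * (n-1).choose (ℓ-1)) * (n-ℓ).choose ℓ := by ring
      _ = (ℓ * n.choose ℓ) * (n-ℓ).choose ℓ := by rw [key2]
      _ = ℓ * (n.choose ℓ * (n-ℓ).choose ℓ) := by ring
      _ = _ := by rw [key1]
  have hC2pos : (0:ℝ) < ((2*ℓ).choose ℓ : ℝ) := by
    exact_mod_cast Nat.choose_pos (show ℓ ≤ 2*ℓ by omega)
  have hCnpos : (0:ℝ) < (n.choose (2*ℓ) : ℝ) := by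
    exact_mod_cast Nat.choose_pos h2n
  have hnpos : (0:ℝ) < (n:ℝ) := by exact_mod_cast hn0
  have hid : ((n-1).choose (ℓ-1) : ℝ) * ((n-ℓ).choose ℓ : ℝ) / ((2*ℓ).choose ℓ : ℝ)
      = ((ℓ:ℝ)/(n:ℝ)) * (n.choose (2*ℓ) : ℝ) := by
    have keyR : (n:ℝ) * (((n-1).choose (ℓ-1):ℝ) * ((n-ℓ).choose ℓ:ℝ))
        = (ℓ:ℝ) * ((n.choose (2*ℓ):ℝ) * ((2*ℓ).choose ℓ:ℝ)) := by exact_mod_cast keyN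
    field_simp
    linear_combination keyR
  have hdivle : (∑ T ∈ (range n).powersetCard (2*ℓ),
        ((F.filter (fun A => A.card = ℓ ∧ A ⊆ T)).card : ℝ)) / ((2*ℓ).choose ℓ : ℝ)
      ≤ ((ℓ:ℝ)/(n:ℝ)) * (n.choose (2*ℓ) : ℝ) := by
    rw [← hid]
    exact (div_le_div_iff_of_pos_right hC2pos).mpr hgsum
  have hfinal : (n.choose (2*ℓ):ℝ) * binNorm n F
      ≤ (n.choose (2*ℓ):ℝ) * ((ℓ:ℝ) + (ℓ:ℝ)/(n:ℝ)) := by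
    have hexp : (n.choose (2*ℓ):ℝ) * ((ℓ:ℝ) + (ℓ:ℝ)/(n:ℝ))
        = (n.choose (2*ℓ):ℝ) * (ℓ:ℝ) + ((ℓ:ℝ)/(n:ℝ)) * (n.choose (2*ℓ):ℝ) := by ring
    rw [hexp]
    linarith [hsum1, hdivle]
  exact le_of_mul_le_mul_left hfinal hCnpos
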